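/- For γ > 0, L a positive integer, and z ≥ 0, define In_L(z) = ∫_{x≥z} ∫_{y∈ℝ} Σ_{i=0}^{L-1} (γ(x²+y²))^i/i! · e^{-γ(x²+y²)} dy dx. Then In_L(z) = Σ_{i=0}^{L-1} Σ_{k=0}^{i} Γ(1/2+k)·Γ_inc(1/2+i-k, γz²)/(2γ·k!·(i-k)!). -/

import Mathlib

open MeasureTheory Real Set

/-- Upper incomplete gamma function `Γ_inc(a, t) = ∫_t^∞ s^(a-1) e^(-s) ds`. -/
noncomputable def Ginc (a t : ℝ) : ℝ := ∫ s in Set.Ioi t, s ^ (a - 1) * Real.exp (-s)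

lemma aux_int {γ : ℝ} (hγ : 0 < γ) (n : ℕ) :
    Integrable (fun x : ℝ => x ^ (2*n) * Real.exp (-(γ * x ^ 2))) := by
  have h := integrable_rpow_mul_exp_neg_mul_sq hγ (s := ((2*n : ℕ) : ℝ))
    (by have : (0:ℝ) ≤ (2*n : ℕ) := Nat.cast_nonneg _; linarith)
  refine h.congr (Filter.Eventually.of_forall fun x => ?_)
  simp only [Real.rpow_natCast, neg_mul]

lemma image_sq {γ z : ℝ} (hγ : 0 < γ) (hz : 0 ≤ z) :
    (fun x : ℝ => γ * x ^ 2) '' Ioi z = Ioi (γ * z ^ 2) := by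
  ext s
  constructor
  · rintro ⟨x, hx, rfl⟩
    have : z ^ 2 < x ^ 2 := by nlinarith [mem_Ioi.mp hx]
    exact mul_lt_mul_of_pos_left this hγ
  · intro hs
    have hs' : γ * z ^ 2 < s := hs
    have hs0 : 0 ≤ s := le_trans (by positivity) hs'.le
    refine ⟨Real.sqrt (s / γ), ?_, ?_⟩
    · have h1 : z ^ 2 < s / γ := (lt_div_iff₀ hγ).mpr (by linarith [hs'])
      rw [mem_Ioi]
      nlinarith [Real.sq_sqrt (by positivity : (0:ℝ) ≤ s / γ), Real.sqrt_nonneg (s / γ)]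
    · show γ * Real.sqrt (s / γ) ^ 2 = s
      rw [Real.sq_sqrt (by positivity : (0:ℝ) ≤ s / γ)]
      field_simp

lemma key_cov {γ z : ℝ} (hγ : 0 < γ) (hz : 0 ≤ z) (m : ℕ) :
    Ginc (1/2 + m) (γ * z ^ 2)
      = (2 * γ ^ ((m:ℝ) + 1/2)) * ∫ x in Ioi z, x ^ (2*m) * Real.exp (-(γ * x ^ 2)) := by
  have hderiv : ∀ x ∈ Ioi z, HasDerivWithinAt (fun x : ℝ => γ * x ^ 2) (γ * (2 * x)) (Ioi z) x := by
    intro x _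
    have : HasDerivAt (fun x : ℝ => γ * x ^ 2) (γ * (2 * x ^ 1)) x :=
      (hasDerivAt_pow 2 x).const_mul γ
    simpa using this.hasDerivWithinAt
  have hinj : InjOn (fun x : ℝ => γ * x ^ 2) (Ioi z) := by
    intro a ha b hb hab
    have ha0 : 0 ≤ a := le_trans hz (le_of_lt ha)
    have hb0 : 0 ≤ b := le_trans hz (le_of_lt hb)
    have h2 : a ^ 2 = b ^ 2 := by
      have := hab
      simp only at this
      exact mul_left_cancel₀ (ne_of_gt hγ) this
    calc a = Real.sqrt (a ^ 2) := (Real.sqrt_sq ha0).symm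
    _ = Real.sqrt (b ^ 2) := by rw [h2]
    _ = b := Real.sqrt_sq hb0
  have himg := integral_image_eq_integral_abs_deriv_smul measurableSet_Ioi hderiv hinj
    (fun s => s ^ ((1/2 + (m:ℝ)) - 1) * Real.exp (-s))
  rw [Ginc, ← image_sq hγ hz, himg, ← MeasureTheory.integral_const_mul]
  refine setIntegral_congr_fun measurableSet_Ioi (fun x hx => ?_)
  have hx0 : 0 < x := lt_of_le_of_lt hz hx
  have h1 : (γ * x ^ 2) ^ ((1/2 + (m:ℝ)) - 1)
      = γ ^ ((m:ℝ) - 1/2) * x ^ (2 * (m:ℝ) - 1) := by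
    rw [Real.mul_rpow hγ.le (sq_nonneg x)]
    congr 1
    · congr 1; ring
    · rw [← Real.rpow_natCast x 2, ← Real.rpow_mul hx0.le]
      congr 1
      push_cast
      ring
  have h2 : x ^ (2 * (m:ℝ) - 1) * x = (x:ℝ) ^ (2*m) := by
    rw [← Real.rpow_natCast x (2*m),
      show ((2*m : ℕ) : ℝ) = (2 * (m:ℝ) - 1) + 1 by push_cast; ring,
      Real.rpow_add hx0, Real.rpow_one]
  have h3 : γ ^ ((m:ℝ) + 1/2) = γ ^ ((m:ℝ) - 1/2) * γ := by
    rw [show (m:ℝ) + 1/2 = ((m:ℝ) - 1/2) + 1 by ring, Real.rpow_add hγ, Real.rpow_one]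
  rw [smul_eq_mul, h1, abs_of_pos (by positivity), h3, ← h2]
  ring

lemma Ginc_zero {a : ℝ} (ha : 0 < a) : Ginc a 0 = Real.Gamma a := by
  rw [Real.Gamma_eq_integral ha, Ginc]
  exact setIntegral_congr_fun measurableSet_Ioi fun x _ => mul_comm _ _

lemma gauss_moment {γ : ℝ} (hγ : 0 < γ) (k : ℕ) :
    (∫ y : ℝ, y ^ (2*k) * Real.exp (-(γ * y ^ 2)))
      = Real.Gamma (1/2 + k) / γ ^ ((k:ℝ) + 1/2) := by
  have h := integral_comp_abs (f := fun t => t ^ (2*k) * Real.exp (-(γ * t ^ 2)))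
  have h2 : (∫ y : ℝ, y ^ (2*k) * Real.exp (-(γ * y ^ 2)))
      = ∫ y : ℝ, |y| ^ (2*k) * Real.exp (-(γ * |y| ^ 2)) := by
    refine integral_congr_ae (Filter.Eventually.of_forall fun y => ?_)
    show y ^ (2*k) * Real.exp (-(γ * y ^ 2)) = |y| ^ (2*k) * Real.exp (-(γ * |y| ^ 2))
    rw [sq_abs, ← abs_pow, abs_of_nonneg ((even_two_mul k).pow_nonneg y)]
  have h3 := key_cov hγ (le_refl (0:ℝ)) k
  have h4 : Ginc (1/2 + k) (γ * (0:ℝ) ^ 2) = Real.Gamma (1/2 + k) := by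
    rw [show γ * (0:ℝ)^2 = 0 by ring, Ginc_zero (by positivity)]
  have hpos : (0:ℝ) < γ ^ ((k:ℝ) + 1/2) := Real.rpow_pos_of_pos hγ _
  rw [h2, h]
  rw [h4] at h3
  field_simp at h3 ⊢
  linarith [h3]

lemma expand_term (γ : ℝ) (i : ℕ) (x y : ℝ) :
    (γ * (x ^ 2 + y ^ 2)) ^ i / (Nat.factorial i) * Real.exp (-(γ * (x ^ 2 + y ^ 2)))
      = ∑ k ∈ Finset.range (i+1),
          (γ ^ i * (i.choose k) / (Nat.factorial i)) *
            (x ^ (2*(i-k)) * Real.exp (-(γ * x ^ 2))) *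
            (y ^ (2*k) * Real.exp (-(γ * y ^ 2))) := by
  have h1 : (x ^ 2 + y ^ 2) ^ i
      = ∑ k ∈ Finset.range (i+1), y ^ (2*k) * x ^ (2*(i-k)) * (i.choose k : ℝ) := by
    rw [add_comm (x^2), add_pow]
    refine Finset.sum_congr rfl fun k hk => ?_
    rw [pow_mul, pow_mul]
  have h2 : Real.exp (-(γ * (x ^ 2 + y ^ 2)))
      = Real.exp (-(γ * x ^ 2)) * Real.exp (-(γ * y ^ 2)) := by
    rw [← Real.exp_add]; ring_nf
  rw [mul_pow, h1, h2, Finset.mul_sum, Finset.sum_div, Finset.sum_mul]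
  exact Finset.sum_congr rfl fun k hk => by ring

lemma final_alg (γ : ℝ) (hγ : 0 < γ) (i k : ℕ) (hk' : k ≤ i) (t : ℝ) :
    γ ^ i * (i.choose k : ℝ) / (Nat.factorial i) *
        (Ginc (1/2 + ((i-k:ℕ):ℝ)) t / (2 * γ ^ (((i-k:ℕ):ℝ) + 1/2))) *
        (Real.Gamma (1/2 + k) / γ ^ ((k:ℝ) + 1/2))
      = Real.Gamma (1 / 2 + k) * Ginc (1 / 2 + (i - k : ℕ)) t
          / (2 * γ * (Nat.factorial k) * (Nat.factorial (i - k))) := by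
  have hfact : (i.factorial : ℝ) = (i.choose k) * k.factorial * (i-k).factorial := by
    exact_mod_cast (Nat.choose_mul_factorial_mul_factorial hk').symm
  have hg : γ ^ (((i-k:ℕ):ℝ) + 1/2) * γ ^ ((k:ℝ) + 1/2) = γ ^ i * γ := by
    rw [← Real.rpow_add hγ,
      show (((i-k:ℕ):ℝ)+1/2) + ((k:ℝ)+1/2) = (i:ℝ) + 1 by push_cast [Nat.cast_sub hk']; ring,
      Real.rpow_add hγ, Real.rpow_one, Real.rpow_natCast]
  have h1 : (0:ℝ) < γ ^ (((i-k:ℕ):ℝ) + 1/2) := Real.rpow_pos_of_pos hγ _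
  have h2 : (0:ℝ) < γ ^ ((k:ℝ) + 1/2) := Real.rpow_pos_of_pos hγ _
  have h3 : (0:ℝ) < (i.choose k : ℝ) := by exact_mod_cast Nat.choose_pos hk'
  have h4 : (k.factorial : ℝ) ≠ 0 := by exact_mod_cast k.factorial_ne_zero
  have h5 : ((i-k).factorial : ℝ) ≠ 0 := by exact_mod_cast (i-k).factorial_ne_zero
  set G := Ginc (1/2 + ((i-k:ℕ):ℝ)) t with hG
  set A := Real.Gamma (1/2 + (k:ℝ)) with hA
  set g1 := γ ^ (((i-k:ℕ):ℝ) + 1/2) with hg1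
  set g2 := γ ^ ((k:ℝ) + 1/2) with hg2
  rw [hfact]
  field_simp
  linear_combination (-(G * A)) * hg

theorem stmt1 (γ : ℝ) (hγ : 0 < γ) (L : ℕ) (hL : 1 ≤ L) (z : ℝ) (hz : 0 ≤ z) :
    (∫ x in Set.Ici z, ∫ y : ℝ,
        ∑ i ∈ Finset.range L,
          (γ * (x ^ 2 + y ^ 2)) ^ i / (Nat.factorial i) * Real.exp (-(γ * (x ^ 2 + y ^ 2))))
      = ∑ i ∈ Finset.range L, ∑ k ∈ Finset.range (i + 1),
          Real.Gamma (1 / 2 + k) * Ginc (1 / 2 + (i - k : ℕ)) (γ * z ^ 2)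
            / (2 * γ * (Nat.factorial k) * (Nat.factorial (i - k))) := by
  have hstep1 : ∀ x : ℝ,
      (∫ y : ℝ, ∑ i ∈ Finset.range L,
          (γ * (x ^ 2 + y ^ 2)) ^ i / (Nat.factorial i) * Real.exp (-(γ * (x ^ 2 + y ^ 2))))
        = ∑ i ∈ Finset.range L, ∑ k ∈ Finset.range (i+1),
            (γ ^ i * (i.choose k) / (Nat.factorial i)) *
              (x ^ (2*(i-k)) * Real.exp (-(γ * x ^ 2))) *
              (Real.Gamma (1/2 + k) / γ ^ ((k:ℝ) + 1/2)) := by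
    intro x
    simp_rw [expand_term γ _ x]
    rw [MeasureTheory.integral_finset_sum _ (fun i _ =>
      integrable_finset_sum _ (fun k _ => (aux_int hγ k).const_mul _))]
    refine Finset.sum_congr rfl fun i _ => ?_
    rw [MeasureTheory.integral_finset_sum _ (fun k _ => (aux_int hγ k).const_mul _)]
    refine Finset.sum_congr rfl fun k _ => ?_
    rw [MeasureTheory.integral_const_mul, gauss_moment hγ k]
  rw [MeasureTheory.integral_Ici_eq_integral_Ioi,
    setIntegral_congr_fun measurableSet_Ioi fun x _ => hstep1 x,
    MeasureTheory.integral_finset_sum _ (fun i _ => (integrable_finset_sum _ (fun k _ =>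
      (((aux_int hγ (i-k)).const_mul _).mul_const _))).restrict)]
  refine Finset.sum_congr rfl fun i _ => ?_
  rw [MeasureTheory.integral_finset_sum _ (fun k _ =>
    (((aux_int hγ (i-k)).const_mul _).mul_const _).restrict)]
  refine Finset.sum_congr rfl fun k hk => ?_
  have hk' : k ≤ i := Nat.lt_succ_iff.mp (Finset.mem_range.mp hk)
  rw [MeasureTheory.integral_mul_const, MeasureTheory.integral_const_mul]
  have hint : (∫ x in Ioi z, x ^ (2*(i-k)) * Real.exp (-(γ * x ^ 2)))
      = Ginc (1/2 + ((i-k:ℕ):ℝ)) (γ * z ^ 2) / (2 * γ ^ (((i-k:ℕ):ℝ) + 1/2)) := by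
    rw [key_cov hγ hz (i-k)]
    have : (0:ℝ) < 2 * γ ^ (((i-k:ℕ):ℝ) + 1/2) := by positivity
    field_simp
  rw [hint]
  exact final_alg γ hγ i k hk' _
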